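/- Let Γ₁ and Γ₂ be groups and C an abelian group. Then the map Θ₁ : H²(Γ₁,C) ⊕ H²(Γ₂,C) ⊕ BHom(Γ₁,Γ₂,C) → H²(Γ₁ × Γ₂,C) induced by sending (ω₁,ω₂,γ) to the cocycle Ω((g₁,g₂),(h₁,h₂)) = ω₁(g₁,h₁) + ω₂(g₂,h₂) + γ(g₂,h₁) is a well-defined group isomorphism. -/

import Mathlib

/-- A normalized 2-cocycle on a group `G` with values in an abelian group `C`. -/
def IsCocycle {G C : Type*} [Group G] [AddCommGroup C] (Ω : G → G → C) : Prop :=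
  (∀ g h k, Ω g h + Ω (g * h) k = Ω g (h * k) + Ω h k) ∧
  (∀ g, Ω g 1 = 0) ∧ (∀ g, Ω 1 g = 0)

/-- A 2-coboundary on a group `G` with values in an abelian group `C`. -/
def IsCoboundary {G C : Type*} [Group G] [AddCommGroup C] (Ω : G → G → C) : Prop :=
  ∃ F : G → C, F 1 = 0 ∧ ∀ g h, Ω g h = F g + F h - F (g * h)

/-- A bihomomorphism `Γ₁ × Γ₂ → C`: a map which is a group homomorphism in each variable. -/
def IsBihom {Γ₁ Γ₂ C : Type*} [Group Γ₁] [Group Γ₂] [AddCommGroup C]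
    (γ : Γ₁ → Γ₂ → C) : Prop :=
  (∀ g g' h, γ (g * g') h = γ g h + γ g' h) ∧ (∀ g h h', γ g (h * h') = γ g h + γ g h')

/-- The map `Θ₁ : H²(Γ₁,C) ⊕ H²(Γ₂,C) ⊕ BHom(Γ₁,Γ₂,C) → H²(Γ₁ × Γ₂,C)` induced by
`(ω₁,ω₂,γ) ↦ Ω` with `Ω((g₁,g₂),(h₁,h₂)) = ω₁(g₁,h₁) + ω₂(g₂,h₂) + γ(g₂,h₁)` is a
well-defined group isomorphism. Expressed at the level of cocycles: the image of a triple is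
a cocycle; it is a coboundary iff `ω₁`, `ω₂` are coboundaries and `γ = 0` (well-definedness
and injectivity); and every cocycle on `Γ₁ × Γ₂` is cohomologous to the image of some triple
(surjectivity). -/
theorem secondCohomology_prod_iso
    {Γ₁ Γ₂ C : Type*} [Group Γ₁] [Group Γ₂] [AddCommGroup C] :
    (∀ (ω₁ : Γ₁ → Γ₁ → C) (ω₂ : Γ₂ → Γ₂ → C) (γ : Γ₁ → Γ₂ → C),
      IsCocycle ω₁ → IsCocycle ω₂ → IsBihom γ →
      IsCocycle (fun x y : Γ₁ × Γ₂ => ω₁ x.1 y.1 + ω₂ x.2 y.2 + γ y.1 x.2))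
    ∧
    (∀ (ω₁ : Γ₁ → Γ₁ → C) (ω₂ : Γ₂ → Γ₂ → C) (γ : Γ₁ → Γ₂ → C),
      IsCocycle ω₁ → IsCocycle ω₂ → IsBihom γ →
      (IsCoboundary (fun x y : Γ₁ × Γ₂ => ω₁ x.1 y.1 + ω₂ x.2 y.2 + γ y.1 x.2)
        ↔ (IsCoboundary ω₁ ∧ IsCoboundary ω₂ ∧ ∀ g h, γ g h = 0)))
    ∧
    (∀ Ω : (Γ₁ × Γ₂) → (Γ₁ × Γ₂) → C, IsCocycle Ω →
      ∃ (ω₁ : Γ₁ → Γ₁ → C) (ω₂ : Γ₂ → Γ₂ → C) (γ : Γ₁ → Γ₂ → C),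
        IsCocycle ω₁ ∧ IsCocycle ω₂ ∧ IsBihom γ ∧
        IsCoboundary (fun x y : Γ₁ × Γ₂ =>
          Ω x y - (ω₁ x.1 y.1 + ω₂ x.2 y.2 + γ y.1 x.2))) := by
  have bihom_one_left : ∀ (γ : Γ₁ → Γ₂ → C), IsBihom γ → ∀ h, γ 1 h = 0 := by
    intro γ hγ h
    have := hγ.1 1 1 h
    simpa using this.symm
  have bihom_one_right : ∀ (γ : Γ₁ → Γ₂ → C), IsBihom γ → ∀ g, γ g 1 = 0 := by
    intro γ hγ g
    have := hγ.2 g 1 1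
    simpa using this.symm
  refine ⟨?_, ?_, ?_⟩
  · -- Part 1 : cocycle
    intro ω₁ ω₂ γ hω₁ hω₂ hγ
    refine ⟨?_, ?_, ?_⟩
    · intro g h k
      simp only [Prod.fst_mul, Prod.snd_mul]
      linear_combination (norm := abel) hω₁.1 g.1 h.1 k.1 + hω₂.1 g.2 h.2 k.2
        + hγ.2 k.1 g.2 h.2 - hγ.1 h.1 k.1 g.2
    · intro g
      simp [hω₁.2.1, hω₂.2.1, bihom_one_left γ hγ]
    · intro g
      simp [hω₁.2.2, hω₂.2.2, bihom_one_right γ hγ]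
  · -- Part 2 : coboundary iff
    intro ω₁ ω₂ γ hω₁ hω₂ hγ
    constructor
    · rintro ⟨F, hF1, hF⟩
      have hγ0 : ∀ g h, γ g h = 0 := by
        intro g h
        have e1 := hF (1, h) (g, 1)
        have e2 := hF (g, 1) (1, h)
        simp only [Prod.mk_mul_mk, one_mul, mul_one] at e1 e2
        rw [hω₁.2.2, hω₂.2.1] at e1
        rw [hω₁.2.1, hω₂.2.2, bihom_one_left γ hγ] at e2
        linear_combination (norm := abel) e1 - e2
      refine ⟨⟨fun g => F (g, 1), by exact hF1, ?_⟩,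
              ⟨fun h => F (1, h), by exact hF1, ?_⟩, hγ0⟩
      · intro g h
        have e := hF (g, 1) (h, 1)
        simp only [Prod.mk_mul_mk, one_mul, mul_one] at e
        rw [hω₂.2.1, bihom_one_right γ hγ] at e
        linear_combination (norm := abel) e
      · intro g h
        have e := hF (1, g) (1, h)
        simp only [Prod.mk_mul_mk, one_mul, mul_one] at e
        rw [hω₁.2.1, bihom_one_left γ hγ] at e
        linear_combination (norm := abel) e
    · rintro ⟨⟨F₁, h11, h1⟩, ⟨F₂, h21, h2⟩, hγ0⟩
      refine ⟨fun p => F₁ p.1 + F₂ p.2, by simp [h11, h21], ?_⟩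
      intro x y
      simp only [Prod.fst_mul, Prod.snd_mul, hγ0, h1 x.1 y.1, h2 x.2 y.2]
      abel
  · -- Part 3 : surjectivity
    intro Ω hΩ
    set ω₁ : Γ₁ → Γ₁ → C := fun g h => Ω (g, 1) (h, 1) with hw1def
    set ω₂ : Γ₂ → Γ₂ → C := fun g h => Ω (1, g) (1, h) with hw2def
    set γ : Γ₁ → Γ₂ → C := fun g h => Ω (1, h) (g, 1) - Ω (g, 1) (1, h) with hgdef
    set F : Γ₁ × Γ₂ → C := fun p => Ω (p.1, 1) (1, p.2) with hFdef
    have hone : ((1 : Γ₁), (1 : Γ₂)) = (1 : Γ₁ × Γ₂) := rfl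
    -- key identity E
    have E : ∀ x y : Γ₁ × Γ₂, Ω x y =
        ω₁ x.1 y.1 + ω₂ x.2 y.2 + γ y.1 x.2 + F (x * y) - F x - F y := by
      rintro ⟨g₁, g₂⟩ ⟨h₁, h₂⟩
      have A := hΩ.1 (g₁, 1) (1, g₂) (h₁, h₂)
      have B := hΩ.1 (1, g₂) (h₁, 1) (1, h₂)
      have Cc := hΩ.1 (h₁, 1) (1, g₂) (1, h₂)
      have D := hΩ.1 (g₁, 1) (h₁, 1) (1, g₂ * h₂)
      simp only [Prod.mk_mul_mk, one_mul, mul_one] at A B Cc D ⊢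
      simp only [hw1def, hw2def, hgdef, hFdef]
      linear_combination (norm := abel) A - B + Cc - D
    have hcoc₁ : IsCocycle ω₁ := by
      refine ⟨fun g h k => ?_, fun g => ?_, fun g => ?_⟩
      · have := hΩ.1 (g, 1) (h, 1) (k, 1)
        simpa [Prod.mk_mul_mk] using this
      · exact hΩ.2.1 ((g, 1) : Γ₁ × Γ₂)
      · exact hΩ.2.2 ((g, 1) : Γ₁ × Γ₂)
    have hcoc₂ : IsCocycle ω₂ := by
      refine ⟨fun g h k => ?_, fun g => ?_, fun g => ?_⟩
      · have := hΩ.1 (1, g) (1, h) (1, k)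
        simpa [Prod.mk_mul_mk] using this
      · exact hΩ.2.1 ((1, g) : Γ₁ × Γ₂)
      · exact hΩ.2.2 ((1, g) : Γ₁ × Γ₂)
    have hγ1 : ∀ c, γ (1 : Γ₁) c = 0 := by
      intro c
      simp [hgdef, hone, hΩ.2.1, hΩ.2.2]
    have hγ2 : ∀ c, γ c (1 : Γ₂) = 0 := by
      intro c
      simp [hgdef, hone, hΩ.2.1, hΩ.2.2]
    -- γ satisfies the cocycle-style identity
    have key : ∀ g h k : Γ₁ × Γ₂,
        γ h.1 g.2 + γ k.1 (g.2 * h.2) = γ (h.1 * k.1) g.2 + γ k.1 h.2 := by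
      intro g h k
      have EΩ := hΩ.1 g h k
      have E1 := E g h
      have E2 := E (g * h) k
      have E3 := E g (h * k)
      have E4 := E h k
      have c1 := hcoc₁.1 g.1 h.1 k.1
      have c2 := hcoc₂.1 g.2 h.2 k.2
      rw [← mul_assoc] at E3
      simp only [Prod.fst_mul, Prod.snd_mul] at E1 E2 E3 E4
      linear_combination (norm := abel) EΩ - E1 - E2 + E3 + E4 - c1 - c2
    have hbihom : IsBihom γ := by
      constructor
      · intro a b c
        have := key ((1 : Γ₁), c) (a, 1) (b, 1)
        simpa [hγ2] using this.symm
      · intro a c d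
        have := key ((1 : Γ₁), c) ((1 : Γ₁), d) (a, 1)
        simpa [hγ1] using this
    refine ⟨ω₁, ω₂, γ, hcoc₁, hcoc₂, hbihom, fun p => -F p, by simp [hFdef, hone, hΩ.2.2], ?_⟩
    intro x y
    dsimp only
    rw [E x y]
    abel
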